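/- arXiv:1910.01052 — 2 statements merged into one kernel-verified Lean document; each statement's English description precedes it below -/
import Mathlib

section
/- Stefanov–Uhlmann pseudolinearization formula: Let V and Ṽ be smooth vector fields on ℝⁿ with complete flows Z(t,z) and Z̃(t,z). Then for all t and z, Z̃(t,z) − Z(t,z) = ∫₀ᵗ (∂Z̃/∂z)(t−s, Z(s,z)) · (Ṽ − V)(Z(s,z)) ds. -/
set_option maxHeartbeats 1000000

open MeasureTheory intervalIntegral
open Set

section aux
variable {n : ℕ}
local notation "E" => Fin n → ℝ

lemma flow_transports (W : E → E) (ZW : ℝ → E → E)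
    (hW : ContDiff ℝ (⊤ : ℕ∞) W)
    (hZWsmooth : ContDiff ℝ (⊤ : ℕ∞) (fun p : ℝ × E => ZW p.1 p.2))
    (hZW0 : ∀ z, ZW 0 z = z)
    (hZWflow : ∀ t z, HasDerivAt (fun s => ZW s z) (W (ZW t z)) t)
    (τ : ℝ) (x : E) :
    fderiv ℝ (fun w => ZW τ w) x (W x) = W (ZW τ x) := by
  have h1le : (1 : ℕ∞) ≤ (⊤ : ℕ∞) := le_top
  set F : ℝ × E → E := fun p => ZW p.1 p.2 with hF
  have hFdiff : Differentiable ℝ F := hZWsmooth.differentiable (by simp)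
  set G : ℝ × E → (ℝ × E →L[ℝ] E) := fderiv ℝ F with hGdef
  have hGsmooth : ContDiff ℝ (⊤ : ℕ∞) G := hZWsmooth.fderiv_right (by simp)
  have hGdiff : Differentiable ℝ G := hGsmooth.differentiable (by simp)
  have hWdiff : Differentiable ℝ W := hW.differentiable (by simp)
  have hpart : ∀ p : ℝ × E, G p (1, 0) = W (F p) := by
    intro p
    have h1 : HasDerivAt (fun s => F (s, p.2)) (G p (1, 0)) p.1 := by
      have := ((hFdiff p).hasFDerivAt.comp_hasDerivAt p.1
        (HasDerivAt.prodMk (hasDerivAt_id p.1) (hasDerivAt_const p.1 p.2)))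
      exact this
    exact h1.unique (hZWflow p.1 p.2)
  have hfd : ∀ (τ : ℝ) (y : E), fderiv ℝ (fun w => ZW τ w) y
      = (G (τ, y)).comp (ContinuousLinearMap.inr ℝ ℝ E) := by
    intro τ y
    have h1 : HasFDerivAt (fun w : E => (τ, w)) (ContinuousLinearMap.inr ℝ ℝ E) y :=
      HasFDerivAt.prodMk (hasFDerivAt_const τ y) (hasFDerivAt_id y)
    exact ((hFdiff (τ, y)).hasFDerivAt.comp y h1).fderiv
  set u : ℝ → E := fun τ => G (τ, x) (0, W x) with hu
  set g : ℝ → E := fun τ => W (ZW τ x) with hg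
  set A : ℝ → (E →L[ℝ] E) := fun τ => fderiv ℝ W (ZW τ x) with hA
  have hAcont : Continuous A := by
    have : Continuous fun τ : ℝ => ZW τ x :=
      hZWsmooth.continuous.comp (continuous_id.prodMk continuous_const)
    exact (hW.continuous_fderiv (by simp)).comp this
  have hu0 : u 0 = W x := by
    have h1 : u 0 = fderiv ℝ (fun w => ZW 0 w) x (W x) := by
      rw [hfd 0 x]; rfl
    have h2 : (fun w => ZW 0 w) = fun w : E => w := funext hZW0
    rw [h1, h2, fderiv_id']
    rfl
  have hg0 : g 0 = W x := by simp [hg, hZW0]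
  have hgderiv : ∀ τ, HasDerivAt g (A τ (g τ)) τ := by
    intro τ
    exact (hWdiff (ZW τ x)).hasFDerivAt.comp_hasDerivAt τ (hZWflow τ x)
  have huderiv : ∀ τ, HasDerivAt u (A τ (u τ)) τ := by
    intro τ
    have h1 : HasDerivAt (fun s => G (s, x)) (fderiv ℝ G (τ, x) (1, 0)) τ := by
      have := ((hGdiff (τ, x)).hasFDerivAt.comp_hasDerivAt τ
        (HasDerivAt.prodMk (hasDerivAt_id τ) (hasDerivAt_const τ x)))
      exact this
    have h2 : HasDerivAt u (fderiv ℝ G (τ, x) (1, 0) (0, W x)) τ := by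
      simpa using (h1.clm_apply (hasDerivAt_const τ ((0, W x) : ℝ × E)))
    have hsymm : fderiv ℝ G (τ, x) (1, 0) (0, W x) = fderiv ℝ G (τ, x) (0, W x) (1, 0) :=
      second_derivative_symmetric (fun y => (hFdiff y).hasFDerivAt)
        (hGdiff (τ, x)).hasFDerivAt _ _
    have hH : (fun p : ℝ × E => G p (1, 0)) = fun p => W (F p) := funext hpart
    have hHd1 : HasFDerivAt (fun p : ℝ × E => G p (1, 0))
        ((fderiv ℝ G (τ, x)).flip ((1 : ℝ), (0 : E))) (τ, x) := by
      have := (hGdiff (τ, x)).hasFDerivAt.clm_apply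
        (hasFDerivAt_const ((1 : ℝ), (0 : E)) (τ, x))
      simpa using this
    have hHd2 : HasFDerivAt (fun p : ℝ × E => W (F p))
        ((A τ).comp (G (τ, x))) (τ, x) := by
      have := (hWdiff (F (τ, x))).hasFDerivAt.comp (τ, x) (hFdiff (τ, x)).hasFDerivAt
      simpa [hA, hF] using this
    have heqd : (fderiv ℝ G (τ, x)).flip ((1 : ℝ), (0 : E)) = (A τ).comp (G (τ, x)) := by
      rw [hH] at hHd1
      exact hHd1.unique hHd2
    have h3 : fderiv ℝ G (τ, x) (0, W x) (1, 0) = A τ (u τ) := by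
      have := congrArg (fun L => L ((0 : ℝ), W x)) heqd
      simpa [ContinuousLinearMap.flip_apply] using this
    rw [hsymm, h3] at h2
    exact h2
  have key : u τ = g τ := by
    have hab : -(|τ| + 1) < |τ| + 1 := by nlinarith [abs_nonneg τ]
    have h0mem : (0 : ℝ) ∈ Ioo (-(|τ| + 1)) (|τ| + 1) := by
      constructor <;> nlinarith [abs_nonneg τ]
    obtain ⟨C, hC⟩ := isCompact_Icc.exists_bound_of_continuousOn
      (s := Icc (-(|τ| + 1)) (|τ| + 1)) hAcont.continuousOn
    set K : NNReal := ⟨max C 0, le_max_right _ _⟩ with hK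
    set v : ℝ → E → E := fun s y => A (projIcc (-(|τ| + 1)) (|τ| + 1) hab.le s) y with hv
    have hlip : ∀ s, LipschitzOnWith K (v s) univ := by
      intro s
      apply LipschitzWith.lipschitzOnWith
      apply (A (projIcc _ _ hab.le s)).lipschitz.weaken
      have := hC _ (projIcc (-(|τ| + 1)) (|τ| + 1) hab.le s).2
      simp only [hK, ← NNReal.coe_le_coe, coe_nnnorm]
      exact NNReal.coe_le_coe.mp (le_trans this (le_max_left C 0))
    have huniq := ODE_solution_unique_of_mem_Icc (s := fun _ => (univ : Set E))
      (fun s _ => hlip s) h0mem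
      (fun s _ => (huderiv s).continuousAt.continuousWithinAt)
      (fun s hs => by
        have h : v s (u s) = A s (u s) := by
          rw [hv]; simp [projIcc_of_mem hab.le (Ioo_subset_Icc_self hs)]
        rw [h]; exact huderiv s)
      (fun s _ => mem_univ _)
      (fun s _ => (hgderiv s).continuousAt.continuousWithinAt)
      (fun s hs => by
        have h : v s (g s) = A s (g s) := by
          rw [hv]; simp [projIcc_of_mem hab.le (Ioo_subset_Icc_self hs)]
        rw [h]; exact hgderiv s)
      (fun s _ => mem_univ _)
      (hu0.trans hg0.symm)
    exact huniq ⟨by nlinarith [neg_abs_le τ, abs_nonneg τ], by nlinarith [le_abs_self τ]⟩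
  have h4 : fderiv ℝ (fun w => ZW τ w) x (W x) = u τ := by rw [hfd τ x]; rfl
  rw [h4, key]

end aux

/-- Stefanov–Uhlmann pseudolinearization formula: for smooth vector fields `V`, `W` with
complete flows `Z`, `ZW`,
`ZW(t,z) − Z(t,z) = ∫₀ᵗ (∂ZW/∂z)(t−s, Z(s,z)) · (W − V)(Z(s,z)) ds`. -/
theorem stmt_3 (n : ℕ) (V W : (Fin n → ℝ) → (Fin n → ℝ))
    (Z ZW : ℝ → (Fin n → ℝ) → (Fin n → ℝ))
    (hV : ContDiff ℝ (⊤ : ℕ∞) V) (hW : ContDiff ℝ (⊤ : ℕ∞) W)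
    (hZsmooth : ContDiff ℝ (⊤ : ℕ∞) (fun p : ℝ × (Fin n → ℝ) => Z p.1 p.2))
    (hZWsmooth : ContDiff ℝ (⊤ : ℕ∞) (fun p : ℝ × (Fin n → ℝ) => ZW p.1 p.2))
    (hZ0 : ∀ z, Z 0 z = z) (hZW0 : ∀ z, ZW 0 z = z)
    (hZflow : ∀ t z, HasDerivAt (fun s => Z s z) (V (Z t z)) t)
    (hZWflow : ∀ t z, HasDerivAt (fun s => ZW s z) (W (ZW t z)) t)
    (t : ℝ) (z : Fin n → ℝ) :
    ZW t z - Z t z =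
      ∫ s in (0:ℝ)..t,
        (fderiv ℝ (fun w => ZW (t - s) w) (Z s z)) (W (Z s z) - V (Z s z)) := by
  have h1le : (1 : ℕ∞) ≤ (⊤ : ℕ∞) := le_top
  set F : ℝ × (Fin n → ℝ) → (Fin n → ℝ) := fun p => ZW p.1 p.2 with hF
  have hFdiff : Differentiable ℝ F := hZWsmooth.differentiable (by simp)
  set G : ℝ × (Fin n → ℝ) → (ℝ × (Fin n → ℝ) →L[ℝ] (Fin n → ℝ)) := fderiv ℝ F with hGdef
  have hGsmooth : ContDiff ℝ (⊤ : ℕ∞) G := hZWsmooth.fderiv_right (by simp)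
  -- spatial fderiv as restriction of the full fderiv
  have hfd : ∀ (τ : ℝ) (y : Fin n → ℝ), fderiv ℝ (fun w => ZW τ w) y
      = (G (τ, y)).comp (ContinuousLinearMap.inr ℝ ℝ (Fin n → ℝ)) := by
    intro τ y
    have h1 : HasFDerivAt (fun w : Fin n → ℝ => (τ, w))
        (ContinuousLinearMap.inr ℝ ℝ (Fin n → ℝ)) y :=
      HasFDerivAt.prodMk (hasFDerivAt_const τ y) (hasFDerivAt_id y)
    exact ((hFdiff (τ, y)).hasFDerivAt.comp y h1).fderiv
  set φ : ℝ → (Fin n → ℝ) := fun s => ZW (t - s) (Z s z) with hφ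
  set I : ℝ → (Fin n → ℝ) :=
    fun s => (fderiv ℝ (fun w => ZW (t - s) w) (Z s z)) (W (Z s z) - V (Z s z)) with hI
  -- derivative of φ
  have hφderiv : ∀ s, HasDerivAt φ (-(I s)) s := by
    intro s
    have hinner : HasDerivAt (fun s : ℝ => ((t - s, Z s z) : ℝ × (Fin n → ℝ)))
        ((-1 : ℝ), V (Z s z)) s := by
      have := HasDerivAt.prodMk ((hasDerivAt_const s t).sub (hasDerivAt_id s)) (hZflow s z)
      simpa using this
    have h1 : HasDerivAt φ (G (t - s, Z s z) (-1, V (Z s z))) s :=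
      by have := (hFdiff (t - s, Z s z)).hasFDerivAt.comp_hasDerivAt s hinner; exact this
    have hsplit : G (t - s, Z s z) ((-1 : ℝ), V (Z s z))
        = -(G (t - s, Z s z) (1, 0)) + G (t - s, Z s z) (0, V (Z s z)) := by
      rw [← ContinuousLinearMap.map_neg, ← ContinuousLinearMap.map_add]
      norm_num
    -- G (1,0) = W ∘ F  (time derivative)
    have hpart : G (t - s, Z s z) (1, 0) = W (ZW (t - s) (Z s z)) := by
      have h2 : HasDerivAt (fun r => F (r, Z s z)) (G (t - s, Z s z) (1, 0)) (t - s) := by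
        have := ((hFdiff (t - s, Z s z)).hasFDerivAt.comp_hasDerivAt (t - s)
          (HasDerivAt.prodMk (hasDerivAt_id (t - s)) (hasDerivAt_const (t - s) (Z s z))))
        exact this
      exact h2.unique (hZWflow (t - s) (Z s z))
    have hkey : W (ZW (t - s) (Z s z))
        = fderiv ℝ (fun w => ZW (t - s) w) (Z s z) (W (Z s z)) :=
      (flow_transports W ZW hW hZWsmooth hZW0 hZWflow (t - s) (Z s z)).symm
    have hsp : ∀ y : Fin n → ℝ, G (t - s, Z s z) (0, y)
        = fderiv ℝ (fun w => ZW (t - s) w) (Z s z) y := by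
      intro y; rw [hfd (t - s) (Z s z)]; rfl
    have : G (t - s, Z s z) ((-1 : ℝ), V (Z s z)) = -(I s) := by
      rw [hsplit, hpart, hkey, hsp, hI]
      simp only [map_sub]
      abel
    rwa [this] at h1
  -- the integrand is continuous
  have hIcont : Continuous I := by
    have hZc : Continuous fun s : ℝ => Z s z :=
      hZsmooth.continuous.comp (continuous_id.prodMk continuous_const)
    have hGc : Continuous fun s : ℝ => G (t - s, Z s z) :=
      hGsmooth.continuous.comp (((continuous_const.sub continuous_id).prodMk hZc))
    have : Continuous fun s : ℝ => G (t - s, Z s z)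
        ((0 : ℝ), W (Z s z) - V (Z s z)) := by
      apply hGc.clm_apply
      exact continuous_const.prodMk
        (((hW.continuous).comp hZc).sub ((hV.continuous).comp hZc))
    have heq : I = fun s : ℝ => G (t - s, Z s z) ((0 : ℝ), W (Z s z) - V (Z s z)) := by
      funext s
      show (fderiv ℝ (fun w => ZW (t - s) w) (Z s z)) (W (Z s z) - V (Z s z))
        = G (t - s, Z s z) ((0 : ℝ), W (Z s z) - V (Z s z))
      rw [hfd (t - s) (Z s z)]; rfl
    rw [heq]; exact this
  -- FTC
  have hftc := intervalIntegral.integral_eq_sub_of_hasDerivAt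
    (f := φ) (f' := fun s => -(I s))
    (fun s _ => hφderiv s) ((hIcont.neg).intervalIntegrable 0 t)
  have hφ0 : φ 0 = ZW t z := by rw [hφ]; simp [hZ0]
  have hφt : φ t = Z t z := by rw [hφ]; simp [hZW0]
  rw [intervalIntegral.integral_neg, hφt, hφ0] at hftc
  have h2 : (∫ s in (0:ℝ)..t, I s) = ZW t z - Z t z := by
    have h3 := congrArg Neg.neg hftc
    simpa [neg_sub] using h3
  exact h2.symm
end

section
/- With G₋ as above and A = (a₁₁−a₅₅)ξ_I² + (a₃₃−a₅₅)ξ_T², B = 4E²ξ_I²ξ_T², assuming A > 0 and A² − B > 0, one has ∂G₋/∂a₁₁ = −4E²ξ_I⁴ξ_T² / (√(A²−B)(√(A²−B)+A)) and ∂G₋/∂a₃₃ = −4E²ξ_I²ξ_T⁴ / (√(A²−B)(√(A²−B)+A)). In particular both are ≤ 0, vanishing when E² = 0 or ξ_Iξ_T = 0. -/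
/-- Formulas for the derivatives of the `qSV` wave speed `G₋` in the parameters `a₁₁`, `a₃₃`:
`∂G₋/∂a₁₁ = −4E²ξ_I⁴ξ_T²/(√(A²−B)(√(A²−B)+A))`,
`∂G₋/∂a₃₃ = −4E²ξ_I²ξ_T⁴/(√(A²−B)(√(A²−B)+A))`; in particular both are `≤ 0`, vanishing
when `E² = 0` or `ξ_I²ξ_T² = 0`. -/
theorem stmt_12 (a11 a33 a55 E2 ξI2 ξT2 : ℝ)
    (hξI : 0 ≤ ξI2) (hξT : 0 ≤ ξT2) (hE : 0 ≤ E2)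
    (A B : ℝ) (hA : A = (a11 - a55) * ξI2 + (a33 - a55) * ξT2)
    (hB : B = 4 * E2 * ξI2 * ξT2)
    (hApos : 0 < A) (hAB : 0 < A ^ 2 - B)
    (Gm : ℝ → ℝ → ℝ)
    (hGm : ∀ t u, Gm t u = (t + a55) * ξI2 + (u + a55) * ξT2 -
      Real.sqrt (((t - a55) * ξI2 + (u - a55) * ξT2) ^ 2 - 4 * E2 * ξI2 * ξT2)) :
    deriv (fun t => Gm t a33) a11 =
        -(4 * E2 * ξI2 ^ 2 * ξT2) / (Real.sqrt (A ^ 2 - B) * (Real.sqrt (A ^ 2 - B) + A)) ∧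
    deriv (fun u => Gm a11 u) a33 =
        -(4 * E2 * ξI2 * ξT2 ^ 2) / (Real.sqrt (A ^ 2 - B) * (Real.sqrt (A ^ 2 - B) + A)) ∧
    deriv (fun t => Gm t a33) a11 ≤ 0 ∧ deriv (fun u => Gm a11 u) a33 ≤ 0 ∧
    (E2 = 0 ∨ ξI2 * ξT2 = 0 →
      deriv (fun t => Gm t a33) a11 = 0 ∧ deriv (fun u => Gm a11 u) a33 = 0) := by
  set s := Real.sqrt (A ^ 2 - B) with hsdef
  have hs : 0 < s := Real.sqrt_pos.mpr hAB
  have hsq : s ^ 2 = A ^ 2 - B := Real.sq_sqrt hAB.le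
  have hden : 0 < s * (s + A) := mul_pos hs (by linarith)
  -- derivative in t
  have hd1 : HasDerivAt (fun t => Gm t a33) (ξI2 - 1 / (2 * s) * (2 * A * ξI2)) a11 := by
    have hfun : (fun t => Gm t a33) = fun t => (t + a55) * ξI2 + (a33 + a55) * ξT2 -
        Real.sqrt (((t - a55) * ξI2 + (a33 - a55) * ξT2) ^ 2 - 4 * E2 * ξI2 * ξT2) := by
      funext t; rw [hGm]
    rw [hfun]
    have hg : HasDerivAt (fun t => (t - a55) * ξI2 + (a33 - a55) * ξT2) ξI2 a11 := by
      simpa using (((hasDerivAt_id a11).sub_const a55).mul_const ξI2).add_const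
        ((a33 - a55) * ξT2)
    have hgv : (a11 - a55) * ξI2 + (a33 - a55) * ξT2 = A := hA.symm
    have hq : HasDerivAt
        (fun t => ((t - a55) * ξI2 + (a33 - a55) * ξT2) ^ 2 - 4 * E2 * ξI2 * ξT2)
        (2 * A * ξI2) a11 := by
      have h := (hg.pow 2).sub_const (4 * E2 * ξI2 * ξT2)
      norm_num [hgv] at h
      convert h.sub_const (4 * E2 * ξI2 * ξT2) using 1
    have hqv : ((a11 - a55) * ξI2 + (a33 - a55) * ξT2) ^ 2 - 4 * E2 * ξI2 * ξT2
        = A ^ 2 - B := by rw [hgv, hB]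
    have hsqrt : HasDerivAt
        (fun t => Real.sqrt (((t - a55) * ξI2 + (a33 - a55) * ξT2) ^ 2 - 4 * E2 * ξI2 * ξT2))
        (1 / (2 * s) * (2 * A * ξI2)) a11 := by
      have := (Real.hasDerivAt_sqrt (x := ((a11 - a55) * ξI2 + (a33 - a55) * ξT2) ^ 2
        - 4 * E2 * ξI2 * ξT2) (by rw [hqv]; exact hAB.ne')).comp a11 hq
      simpa [hqv, hsdef, Function.comp_def] using this
    have hlin : HasDerivAt (fun t : ℝ => (t + a55) * ξI2 + (a33 + a55) * ξT2) ξI2 a11 := by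
      simpa using (((hasDerivAt_id a11).add_const a55).mul_const ξI2).add_const
        ((a33 + a55) * ξT2)
    exact hlin.sub hsqrt
  have hd2 : HasDerivAt (fun u => Gm a11 u) (ξT2 - 1 / (2 * s) * (2 * A * ξT2)) a33 := by
    have hfun : (fun u => Gm a11 u) = fun u => (a11 + a55) * ξI2 + (u + a55) * ξT2 -
        Real.sqrt (((a11 - a55) * ξI2 + (u - a55) * ξT2) ^ 2 - 4 * E2 * ξI2 * ξT2) := by
      funext u; rw [hGm]
    rw [hfun]
    have hg : HasDerivAt (fun u => (a11 - a55) * ξI2 + (u - a55) * ξT2) ξT2 a33 := by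
      simpa using (((hasDerivAt_id a33).sub_const a55).mul_const ξT2).const_add
        ((a11 - a55) * ξI2)
    have hgv : (a11 - a55) * ξI2 + (a33 - a55) * ξT2 = A := hA.symm
    have hq : HasDerivAt
        (fun u => ((a11 - a55) * ξI2 + (u - a55) * ξT2) ^ 2 - 4 * E2 * ξI2 * ξT2)
        (2 * A * ξT2) a33 := by
      have h := (hg.pow 2).sub_const (4 * E2 * ξI2 * ξT2)
      norm_num [hgv] at h
      convert h.sub_const (4 * E2 * ξI2 * ξT2) using 1
    have hqv : ((a11 - a55) * ξI2 + (a33 - a55) * ξT2) ^ 2 - 4 * E2 * ξI2 * ξT2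
        = A ^ 2 - B := by rw [hgv, hB]
    have hsqrt : HasDerivAt
        (fun u => Real.sqrt (((a11 - a55) * ξI2 + (u - a55) * ξT2) ^ 2 - 4 * E2 * ξI2 * ξT2))
        (1 / (2 * s) * (2 * A * ξT2)) a33 := by
      have := (Real.hasDerivAt_sqrt (x := ((a11 - a55) * ξI2 + (a33 - a55) * ξT2) ^ 2
        - 4 * E2 * ξI2 * ξT2) (by rw [hqv]; exact hAB.ne')).comp a33 hq
      simpa [hqv, hsdef, Function.comp_def] using this
    have hlin : HasDerivAt (fun u : ℝ => (a11 + a55) * ξI2 + (u + a55) * ξT2) ξT2 a33 := by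
      simpa using (((hasDerivAt_id a33).add_const a55).mul_const ξT2).const_add
        ((a11 + a55) * ξI2)
    exact hlin.sub hsqrt
  have e1 : deriv (fun t => Gm t a33) a11 = -(4 * E2 * ξI2 ^ 2 * ξT2) / (s * (s + A)) := by
    rw [hd1.deriv, eq_div_iff hden.ne']
    field_simp
    linear_combination ξI2 * hsq - ξI2 * hB
  have e2 : deriv (fun u => Gm a11 u) a33 = -(4 * E2 * ξI2 * ξT2 ^ 2) / (s * (s + A)) := by
    rw [hd2.deriv, eq_div_iff hden.ne']
    field_simp
    linear_combination ξT2 * hsq - ξT2 * hB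
  have hnum1 : 0 ≤ 4 * E2 * ξI2 ^ 2 * ξT2 := by positivity
  have hnum2 : 0 ≤ 4 * E2 * ξI2 * ξT2 ^ 2 := by positivity
  refine ⟨e1, e2, ?_, ?_, ?_⟩
  · rw [e1]; exact div_nonpos_of_nonpos_of_nonneg (by linarith) hden.le
  · rw [e2]; exact div_nonpos_of_nonpos_of_nonneg (by linarith) hden.le
  · rintro (h | h)
    · subst h; rw [e1, e2]; norm_num
    · rcases mul_eq_zero.mp h with h' | h' <;> subst h' <;> rw [e1, e2] <;> norm_num
end
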